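/- Let V be a vector space over ℂ and V₁ ⊆ V a linear subspace. Let s ≥ 1 and k ≥ 0 be integers, let μ₁, …, μ_s ∈ ℂ∖{0} be pairwise distinct, and for each 1 ≤ i ≤ s and 0 ≤ j ≤ k let f_{i,j} ∈ ℂ[t] be a polynomial of degree exactly j and v_{i,j} ∈ V. If for every m ∈ ℤ the element ∑_{i=1}^{s} ∑_{j=0}^{k} μ_i^m · f_{i,j}(m) · v_{i,j} lies in V₁, then v_{i,j} ∈ V₁ for all i and j. -/

import Mathlib

open Polynomial



lemma lc_taylor (p : ℂ[X]) : (taylor 1 p).coeff p.natDegree = p.coeff p.natDegree := by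
  rcases eq_or_ne p 0 with rfl | hp
  · simp
  · have h1 : (X + C (1:ℂ)).natDegree = 1 := by compute_degree!
    have := leadingCoeff_comp (p := p) (q := X + C (1:ℂ)) (by rw [h1]; norm_num)
    rw [leadingCoeff_X_add_C] at this
    have h2 : (taylor 1 p).natDegree = p.natDegree := natDegree_taylor p 1
    calc (taylor 1 p).coeff p.natDegree = (taylor 1 p).leadingCoeff := by
          rw [leadingCoeff, h2]
      _ = p.coeff p.natDegree := by
          rw [taylor_apply, this, one_pow, mul_one]; rfl

lemma natDeg_zero_of_taylor (p : ℂ[X]) (h : taylor 1 p = p) : p.natDegree = 0 := by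
  have key : ∀ n : ℕ, p.eval (n : ℂ) = p.eval 0 := by
    intro n
    induction n with
    | zero => simp
    | succ n ih =>
      have := taylor_eval (1:ℂ) p (n : ℂ)
      rw [h] at this
      push_cast
      rw [← this, ih]
  have hq : p - C (p.eval 0) = 0 := by
    apply eq_zero_of_infinite_isRoot
    apply Set.infinite_of_injective_forall_mem (f := fun n : ℕ => (n : ℂ))
      Nat.cast_injective
    intro n
    simp [IsRoot, key n]
  have : p = C (p.eval 0) := by linear_combination hq
  rw [this, natDegree_C]

lemma keyScalar : ∀ (n : ℕ) (ι : Type) [Fintype ι] (μ : ι → ℂ), Function.Injective μ →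
    (∀ i, μ i ≠ 0) → ∀ P : ι → ℂ[X], (∑ i, ((P i).natDegree + 1)) ≤ n →
    (∀ m : ℤ, ∑ i, μ i ^ m * (P i).eval (m : ℂ) = 0) → ∀ i, P i = 0 := by
  intro n
  induction n using Nat.strong_induction_on with
  | _ n IH =>
  intro ι _ μ hinj h0 P hdeg hsum
  classical
  by_contra hc
  push_neg at hc
  obtain ⟨i₀, hi₀⟩ := hc
  -- the differenced family
  set Q : ι → ℂ[X] := fun i => μ i • taylor 1 (P i) - μ i₀ • P i with hQdef
  have hQeval : ∀ (i : ι) (x : ℂ), (Q i).eval x = μ i * (P i).eval (x + 1) - μ i₀ * (P i).eval x := by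
    intro i x
    simp [hQdef, taylor_eval]
  have hQsum : ∀ m : ℤ, ∑ i, μ i ^ m * (Q i).eval (m : ℂ) = 0 := by
    intro m
    have e1 := hsum (m + 1)
    have e2 := hsum m
    calc ∑ i, μ i ^ m * (Q i).eval (m : ℂ)
        = ∑ i, (μ i ^ (m+1) * (P i).eval ((m:ℂ) + 1) - μ i₀ * (μ i ^ m * (P i).eval (m:ℂ))) := by
          refine Finset.sum_congr rfl fun i _ => ?_
          rw [hQeval, zpow_add_one₀ (h0 i)]
          ring
      _ = (∑ i, μ i ^ (m+1) * (P i).eval ((m:ℂ) + 1)) - μ i₀ * ∑ i, μ i ^ m * (P i).eval (m:ℂ) := by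
          rw [Finset.sum_sub_distrib, Finset.mul_sum]
      _ = 0 := by
          rw [e2, mul_zero, sub_zero, ← e1]
          refine Finset.sum_congr rfl fun i _ => ?_
          push_cast
          ring
  -- coefficient facts away from i₀
  have hQcoeff : ∀ i, i ≠ i₀ → (Q i).coeff (P i).natDegree
      = (μ i - μ i₀) * (P i).coeff (P i).natDegree := by
    intro i hi
    simp only [hQdef, coeff_sub, coeff_smul, smul_eq_mul, lc_taylor]
    ring
  have hQdegle : ∀ i, i ≠ i₀ → (Q i).natDegree ≤ (P i).natDegree := by
    intro i _
    refine (natDegree_sub_le _ _).trans (max_le ((natDegree_smul_le _ _).trans ?_) (natDegree_smul_le _ _))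
    rw [natDegree_taylor]
  have hQzero : ∀ i, i ≠ i₀ → Q i = 0 → P i = 0 := by
    intro i hi hq
    have := hQcoeff i hi
    rw [hq, coeff_zero] at this
    have hne : μ i - μ i₀ ≠ 0 := sub_ne_zero.mpr (fun h => hi (hinj h))
    have hlc : (P i).coeff (P i).natDegree = 0 := by
      rcases mul_eq_zero.mp this.symm with h | h
      · exact absurd h hne
      · exact h
    by_contra hP
    exact (leadingCoeff_ne_zero.mpr hP) hlc
  rcases Nat.eq_zero_or_pos (P i₀).natDegree with hd0 | hd0
  · -- constant case: Q i₀ = 0, drop i₀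
    have hPc : P i₀ = C ((P i₀).coeff 0) := eq_C_of_natDegree_eq_zero hd0
    have hQi₀ : Q i₀ = 0 := by
      rw [hQdef]
      simp only
      rw [hPc, taylor_C, sub_self]
    -- restricted family
    set ι' := {i : ι // i ≠ i₀}
    have hsum' : ∀ m : ℤ, ∑ i : ι', μ i.val ^ m * (Q i.val).eval (m : ℂ) = 0 := by
      intro m
      have := hQsum m
      rw [← Finset.add_sum_erase _ _ (Finset.mem_univ i₀), hQi₀] at this
      simp only [eval_zero, mul_zero, zero_add] at this
      rw [← this]
      exact (Finset.sum_subtype (p := fun i => i ≠ i₀) (Finset.univ.erase i₀)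
        (fun x => by simp [Finset.mem_erase]) (fun i => μ i ^ m * (Q i).eval (m:ℂ))).symm
    have hmeas : (∑ i : ι', ((Q i.val).natDegree + 1)) < n := by
      have h1 : (∑ i : ι', ((Q i.val).natDegree + 1)) ≤ ∑ i : ι', ((P i.val).natDegree + 1) :=
        Finset.sum_le_sum fun i _ => Nat.add_le_add_right (hQdegle i.val i.2) 1
      have h2 : ∑ i : ι', ((P i.val).natDegree + 1) + 1 ≤ ∑ i : ι, ((P i).natDegree + 1) := by
        have h4 : (P i₀).natDegree + 1 + ∑ x ∈ Finset.univ.erase i₀, ((P x).natDegree + 1)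
            = ∑ x : ι, ((P x).natDegree + 1) :=
          Finset.add_sum_erase _ (fun i => (P i).natDegree + 1) (Finset.mem_univ i₀)
        have h3 : ∑ i : ι', ((P i.val).natDegree + 1) = ∑ i ∈ Finset.univ.erase i₀, ((P i).natDegree + 1) :=
          (Finset.sum_subtype (p := fun i => i ≠ i₀) (Finset.univ.erase i₀)
            (fun x => by simp [Finset.mem_erase]) (fun i => (P i).natDegree + 1)).symm
        rw [h3]
        omega
      omega
    have hall := IH _ hmeas ι' (fun i => μ i.val)
      (fun a b hab => Subtype.ext (hinj hab)) (fun i => h0 i.val) _ le_rfl hsum'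
    have hPz : ∀ i, i ≠ i₀ → P i = 0 := fun i hi => hQzero i hi (hall ⟨i, hi⟩)
    -- now the original sum is just the i₀ term
    have := hsum 0
    rw [Finset.sum_eq_single i₀ (fun b _ hb => by rw [hPz b hb]; simp)
      (fun hb => absurd (Finset.mem_univ i₀) hb)] at this
    simp only [zpow_zero, one_mul] at this
    apply hi₀
    rw [hPc] at this ⊢
    rw [eval_C] at this
    rw [this, map_zero]
  · -- degree ≥ 1 case
    have hQi₀deg : (Q i₀).natDegree < (P i₀).natDegree := by
      have hle : (Q i₀).natDegree ≤ (P i₀).natDegree := by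
        refine (natDegree_sub_le _ _).trans (max_le ((natDegree_smul_le _ _).trans ?_) (natDegree_smul_le _ _))
        rw [natDegree_taylor]
      have hcoeff : (Q i₀).coeff (P i₀).natDegree = 0 := by
        simp only [hQdef, coeff_sub, coeff_smul, smul_eq_mul, lc_taylor]
        ring
      rcases eq_or_ne (Q i₀) 0 with hq | hq
      · rw [hq, natDegree_zero]; exact hd0
      · rcases lt_or_eq_of_le hle with h | h
        · exact h
        · have hlc := leadingCoeff_ne_zero.mpr hq
          rw [leadingCoeff, h] at hlc
          exact absurd hcoeff hlc
    have hmeas : (∑ i, ((Q i).natDegree + 1)) < n := by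
      refine lt_of_lt_of_le ?_ hdeg
      apply Finset.sum_lt_sum (fun i _ => ?_) ⟨i₀, Finset.mem_univ i₀, by omega⟩
      rcases eq_or_ne i i₀ with rfl | hi
      · omega
      · exact Nat.add_le_add_right (hQdegle i hi) 1
    have hall := IH _ hmeas ι μ hinj h0 Q le_rfl hQsum
    -- Q i₀ = 0 gives taylor 1 (P i₀) = P i₀
    have htay : taylor 1 (P i₀) = P i₀ := by
      have := hall i₀
      rw [hQdef] at this
      simp only [sub_eq_zero] at this
      have h2 : μ i₀ • taylor 1 (P i₀) = μ i₀ • P i₀ := this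
      exact smul_right_injective _ (h0 i₀) h2
    have := natDeg_zero_of_taylor _ htay
    omega

lemma polyIndep {k : ℕ} (f : Fin (k + 1) → ℂ[X])
    (hf : ∀ j, (f j).degree = ((j : ℕ) : WithBot ℕ))
    (a : Fin (k + 1) → ℂ) (h : ∑ j, a j • f j = 0) : ∀ j, a j = 0 := by
  by_contra hc
  push_neg at hc
  obtain ⟨j₁, hj₁⟩ := hc
  classical
  set S : Finset (Fin (k + 1)) := Finset.univ.filter (fun j => a j ≠ 0) with hS
  have hSne : S.Nonempty := ⟨j₁, by simp [hS, hj₁]⟩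
  set j₀ := S.max' hSne with hj₀
  have hj₀S : j₀ ∈ S := S.max'_mem hSne
  have haj₀ : a j₀ ≠ 0 := by simpa [hS] using hj₀S
  have hcoeff : (∑ j, a j • f j).coeff (j₀ : ℕ) = a j₀ * (f j₀).coeff (j₀ : ℕ) := by
    rw [finset_sum_coeff]
    apply Finset.sum_eq_single j₀ (fun b _ hb => ?_) (fun hb => absurd (Finset.mem_univ j₀) hb)
    rcases eq_or_ne (a b) 0 with hab | hab
    · simp [hab]
    · have hbS : b ∈ S := by simp [hS, hab]
      have hblt : b < j₀ := lt_of_le_of_ne (S.le_max' b hbS) hb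
      have : (f b).degree < ((j₀ : ℕ) : WithBot ℕ) := by
        rw [hf b]
        exact_mod_cast Fin.lt_iff_val_lt_val.mp hblt
      rw [coeff_smul, coeff_eq_zero_of_degree_lt this, smul_zero]
  rw [h, coeff_zero] at hcoeff
  have hfne : (f j₀).coeff (j₀ : ℕ) ≠ 0 := by
    have : (f j₀).natDegree = (j₀ : ℕ) := natDegree_eq_of_degree_eq_some (hf j₀)
    rw [← this]
    apply leadingCoeff_ne_zero.mpr
    intro h0
    have := hf j₀
    rw [h0, degree_zero] at this
    exact absurd this (by simp)
  rcases mul_eq_zero.mp hcoeff.symm with h' | h'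
  · exact haj₀ h'
  · exact hfne h'

/- STATEMENT 0: Let V be a vector space over ℂ and V₁ ⊆ V a linear subspace. Let s ≥ 1 and
k ≥ 0 be integers, μ₁, …, μ_s ∈ ℂ∖{0} pairwise distinct, f_{i,j} ∈ ℂ[t] of degree exactly j,
v_{i,j} ∈ V. If ∑_{i=1}^{s} ∑_{j=0}^{k} μ_i^m · f_{i,j}(m) · v_{i,j} ∈ V₁ for all m ∈ ℤ,
then v_{i,j} ∈ V₁ for all i, j. -/
theorem stmt0 {V : Type*} [AddCommGroup V] [Module ℂ V] (V₁ : Submodule ℂ V)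
    (s : ℕ) (hs : 1 ≤ s) (k : ℕ)
    (μ : Fin s → ℂ) (hμ0 : ∀ i, μ i ≠ 0) (hμ : Function.Injective μ)
    (f : Fin s → Fin (k + 1) → Polynomial ℂ)
    (hf : ∀ i j, (f i j).degree = ((j : ℕ) : WithBot ℕ))
    (v : Fin s → Fin (k + 1) → V)
    (h : ∀ m : ℤ, (∑ i : Fin s, ∑ j : Fin (k + 1),
        ((μ i ^ m) * (f i j).eval (m : ℂ)) • v i j) ∈ V₁) :
    ∀ i j, v i j ∈ V₁ := by
  classical
  set ι := Fin s × Fin (k + 1)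
  set c : ℤ → ι → ℂ := fun m p => μ p.1 ^ m * (f p.1 p.2).eval (m : ℂ) with hc
  -- the coefficient vectors span everything
  have hspan : Submodule.span ℂ (Set.range c) = ⊤ := by
    by_contra hlt
    obtain ⟨φ, hφne, hφ⟩ := Submodule.exists_dual_map_eq_bot_of_lt_top
      (lt_top_iff_ne_top.mpr hlt) inferInstance
    have hφ0 : ∀ m : ℤ, φ (c m) = 0 := by
      intro m
      have hcm : c m ∈ Submodule.span ℂ (Set.range c) :=
        Submodule.subset_span (Set.mem_range_self m)
      have := Submodule.mem_map_of_mem (f := φ) hcm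
      rw [hφ] at this
      exact this
    set a : ι → ℂ := fun p => φ (fun q => if p = q then 1 else 0) with ha
    have hφx : ∀ x : ι → ℂ, φ x = ∑ p : ι, x p * a p := by
      intro x
      rw [LinearMap.pi_apply_eq_sum_univ φ x]
      refine Finset.sum_congr rfl fun p _ => ?_
      rw [smul_eq_mul, ha]
    -- reorganize into polynomials
    set P : Fin s → ℂ[X] := fun i => ∑ j, a (i, j) • f i j with hP
    have hPsum : ∀ m : ℤ, ∑ i, μ i ^ m * (P i).eval (m : ℂ) = 0 := by
      intro m
      have := hφ0 m
      rw [hφx] at this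
      rw [← this, Fintype.sum_prod_type]
      refine Finset.sum_congr rfl fun i _ => ?_
      rw [hP]
      simp only [eval_finset_sum, eval_smul, smul_eq_mul, Finset.mul_sum]
      refine Finset.sum_congr rfl fun j _ => ?_
      rw [hc]
      ring
    have hPzero : ∀ i, P i = 0 :=
      keyScalar (∑ i, ((P i).natDegree + 1)) (Fin s) μ hμ hμ0 P le_rfl hPsum
    have haz : ∀ p : ι, a p = 0 := by
      rintro ⟨i, j⟩
      exact polyIndep (f i) (hf i) (fun j => a (i, j)) (hPzero i) j
    apply hφne
    apply LinearMap.ext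
    intro x
    rw [hφx]
    simp [haz]
  intro i j
  -- the evaluation linear map
  set L : (ι → ℂ) →ₗ[ℂ] V :=
    ∑ p : ι, (LinearMap.proj p : (ι → ℂ) →ₗ[ℂ] ℂ).smulRight (v p.1 p.2) with hL
  have hLapp : ∀ x : ι → ℂ, L x = ∑ p : ι, x p • v p.1 p.2 := by
    intro x
    rw [hL, LinearMap.sum_apply]
    refine Finset.sum_congr rfl fun p _ => ?_
    rw [LinearMap.smulRight_apply, LinearMap.proj_apply]
  have hLc : ∀ m : ℤ, L (c m) ∈ V₁ := by
    intro m
    rw [hLapp]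
    have := h m
    rw [Fintype.sum_prod_type]
    exact this
  have hmem : (fun q : ι => if (i, j) = q then (1:ℂ) else 0) ∈
      Submodule.span ℂ (Set.range c) := by rw [hspan]; trivial
  obtain ⟨w, hw⟩ := (Finsupp.mem_span_range_iff_exists_finsupp).mp hmem
  have hvij : L (fun q : ι => if (i, j) = q then (1:ℂ) else 0) = v i j := by
    rw [hLapp]
    rw [Finset.sum_eq_single (i, j) (fun b _ hb => by simp [Ne.symm hb])
      (fun hb => absurd (Finset.mem_univ _) hb)]
    simp
  rw [← hvij, ← hw]
  rw [map_finsuppSum]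
  apply Submodule.sum_mem
  intro m _
  show L (w m • c m) ∈ V₁
  rw [map_smul]
  exact Submodule.smul_mem _ _ (hLc m)
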